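/- There exists a bijection σ₀ : R_N → C_N whose graph is contained in T_N, and which is the unique lexicographic maximizer in the following sense: for every bijection σ : R_N → C_N with σ ≠ σ₀ whose graph is contained in T_N, there exists ℓ ∈ {1,…,d} such that e_m(σ) = e_m(σ₀) for all m with ℓ < m ≤ d and e_ℓ(σ) < e_ℓ(σ₀), where for a bijection τ : R_N → C_N with graph in T_N and 1 ≤ m ≤ d we set e_m(τ) = #{ (i,λ) ∈ R_N : φ((i,λ), τ(i,λ)) = m }. -/

import Mathlib

/-- The set `C_J = { i' ∈ ℤ : 0 < i', p·i' < (p−J)·d, p ∤ i' }`. -/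
def Cset (p d J : ℤ) : Set ℤ :=
  {i' : ℤ | 0 < i' ∧ p * i' < (p - J) * d ∧ ¬ p ∣ i'}

/-- The set `R_J = { (i,λ) : 0 < λ < J, (pλ−J+1)d < p²i < (p(λ+1)−J)d }`. -/
def Rset (p d J : ℤ) : Set (ℤ × ℤ) :=
  {x : ℤ × ℤ | 0 < x.2 ∧ x.2 < J ∧
    (p * x.2 - J + 1) * d < p ^ 2 * x.1 ∧ p ^ 2 * x.1 < (p * (x.2 + 1) - J) * d}

open Finset

section Concrete

variable {p : ℕ} {d J : ℤ}

/-- the row value -/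
def aval (p : ℕ) (d : ℤ) (x : ℤ × ℤ) : ℤ := (p : ℤ) * x.1 - (x.2 - 1) * d

lemma aval_bounds (hx : x ∈ Rset (p:ℤ) d J) :
    ((p : ℤ) - J + 1) * d < (p : ℤ) * aval p d x ∧ (p : ℤ) * aval p d x < (2 * (p : ℤ) - J) * d := by
  obtain ⟨h1, h2, h3, h4⟩ := hx
  have e : (p : ℤ) * aval p d x = (p:ℤ)^2 * x.1 - (p:ℤ) * (x.2 - 1) * d := by
    rw [aval]; ring
  constructor
  · nlinarith [h3]
  · nlinarith [h4]

lemma aval_inj (hp : p.Prime) (hpd : ¬ (p : ℤ) ∣ d) (hJ2 : J < (p : ℤ))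
    (hx : x ∈ Rset (p:ℤ) d J) (hy : y ∈ Rset (p:ℤ) d J) (hxy : aval p d x = aval p d y) : x = y := by
  obtain ⟨hx1, hx2, hx3, hx4⟩ := hx
  obtain ⟨hy1, hy2, hy3, hy4⟩ := hy
  have hpz : (0:ℤ) < (p:ℤ) := by exact_mod_cast hp.pos
  have h5 : (p : ℤ) * (x.1 - y.1) = (x.2 - y.2) * d := by
    rw [aval, aval] at hxy; ring_nf at hxy ⊢; linarith [hxy]
  have hdvd : (p : ℤ) ∣ (x.2 - y.2) * d := ⟨x.1 - y.1, h5.symm⟩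
  have hprime : Prime (p : ℤ) := Nat.prime_iff_prime_int.mp hp
  have hdvd2 : (p : ℤ) ∣ (x.2 - y.2) := by
    rcases hprime.dvd_mul.mp hdvd with h | h
    · exact h
    · exact absurd h hpd
  obtain ⟨k, hk⟩ := hdvd2
  have hk0 : k = 0 := by
    rcases lt_trichotomy k 0 with h | h | h
    · exfalso
      have : (p:ℤ) * k ≤ (p:ℤ) * (-1) := by
        apply mul_le_mul_of_nonneg_left (by omega) (by omega)
      omega
    · exact h
    · exfalso
      have : (p:ℤ) * 1 ≤ (p:ℤ) * k := by
        apply mul_le_mul_of_nonneg_left (by omega) (by omega)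
      omega
  rw [hk0, mul_zero] at hk
  have h22 : x.2 = y.2 := by omega
  have h11 : x.1 = y.1 := by
    rw [h22] at h5
    simp at h5
    rcases h5 with h | h
    · omega
    · omega
  exact Prod.ext h11 h22

lemma aval_sub_mem (hp : p.Prime) (hd : 0 < d) (hpd : ¬ (p : ℤ) ∣ d)
    (hJ1 : 1 < J) (hJ2 : J < (p : ℤ))
    (hx : x ∈ Rset (p:ℤ) d J) (hbig : d + 1 ≤ aval p d x) : aval p d x - d ∈ Cset (p:ℤ) d J := by
  have hpz : (0:ℤ) < (p:ℤ) := by exact_mod_cast hp.pos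
  obtain ⟨hb1, hb2⟩ := aval_bounds hx
  refine ⟨by omega, ?_, ?_⟩
  · nlinarith
  · rintro ⟨k, hk⟩
    obtain ⟨hx1, hx2, hx3, hx4⟩ := hx
    have h5 : (p : ℤ) * (x.1 - k) = x.2 * d := by
      rw [aval] at hk; ring_nf at hk ⊢; linarith [hk]
    have hprime : Prime (p : ℤ) := Nat.prime_iff_prime_int.mp hp
    have hdvd : (p : ℤ) ∣ x.2 * d := ⟨x.1 - k, h5.symm⟩
    rcases hprime.dvd_mul.mp hdvd with h | h
    · obtain ⟨t, ht⟩ := h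
      have ht1 : t = 0 := by
        rcases lt_trichotomy t 0 with h' | h' | h'
        · exfalso
          have : (p:ℤ) * t ≤ (p:ℤ) * (-1) := mul_le_mul_of_nonneg_left (by omega) (by omega)
          omega
        · exact h'
        · exfalso
          have : (p:ℤ) * 1 ≤ (p:ℤ) * t := mul_le_mul_of_nonneg_left (by omega) (by omega)
          omega
      rw [ht1, mul_zero] at ht
      omega
    · exact absurd h hpd

lemma c_lt_aval (hp : p.Prime) (hd : 0 < d) (hJ2 : J < (p : ℤ))
    (hc : c ∈ Cset (p:ℤ) d J) (hx : x ∈ Rset (p:ℤ) d J) : c < aval p d x := by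
  have hpz : (0:ℤ) < (p:ℤ) := by exact_mod_cast hp.pos
  obtain ⟨hc1, hc2, hc3⟩ := hc
  obtain ⟨hb1, hb2⟩ := aval_bounds hx
  nlinarith

lemma Cset_finite (hp : p.Prime) (hd : 0 < d) (hJ1 : 1 < J) : (Cset (p:ℤ) d J).Finite := by
  apply Set.Finite.subset (Set.finite_Icc 1 ((p:ℤ) * d))
  rintro c ⟨h1, h2, h3⟩
  have hpz : (0:ℤ) < (p:ℤ) := by exact_mod_cast hp.pos
  have h4 : (p:ℤ) * c < (p:ℤ) * d := by nlinarith
  have h5 : c < d := lt_of_mul_lt_mul_left h4 (by omega)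
  constructor
  · omega
  · nlinarith

lemma Rset_finite (hp : p.Prime) (hd : 0 < d) (hJ1 : 1 < J) (hJ2 : J < (p : ℤ)) :
    (Rset (p:ℤ) d J).Finite := by
  apply Set.Finite.subset ((Set.finite_Icc 1 ((p:ℤ) * (p:ℤ) * J * d)).prod (Set.finite_Icc 1 J))
  rintro x ⟨h1, h2, h3, h4⟩
  have hpz : (0:ℤ) < (p:ℤ) := by exact_mod_cast hp.pos
  have hx1pos : 1 ≤ x.1 := by nlinarith
  have h5 : x.2 + 1 ≤ J := by omega
  have h6 : ((p:ℤ) * (x.2 + 1) - J) * d ≤ ((p:ℤ) * J) * d := by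
    have h6a : (p:ℤ) * (x.2 + 1) ≤ (p:ℤ) * J := mul_le_mul_of_nonneg_left h5 (by omega)
    nlinarith
  have h7 : (p:ℤ) ^ 2 * x.1 < (p:ℤ) * J * d := lt_of_lt_of_le h4 h6
  have h8 : x.1 ≤ (p:ℤ) ^ 2 * x.1 := by
    have hp2 : (1:ℤ) ≤ (p:ℤ) ^ 2 := by nlinarith [hpz, sq_nonneg ((p:ℤ) - 1)]
    nlinarith
  have h9 : (p:ℤ) * J * d ≤ (p:ℤ) * (p:ℤ) * J * d := by
    nlinarith [mul_pos (mul_pos hpz (show (0:ℤ) < J by omega)) hd]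
  exact ⟨⟨hx1pos, by linarith⟩, by omega, by omega⟩

end Concrete



-- basic power lemma
lemma pow_swap_lt {K q1 q2 p1 p2 : ℕ} (hK : 2 ≤ K) (h1 : q1 < p1) (h2 : q2 < p1) :
    K ^ q1 + K ^ q2 < K ^ p1 + K ^ p2 := by
  have hq1 : K ^ q1 ≤ K ^ (p1 - 1) := Nat.pow_le_pow_right (by omega) (by omega)
  have hq2 : K ^ q2 ≤ K ^ (p1 - 1) := Nat.pow_le_pow_right (by omega) (by omega)
  have h3 : K ^ p1 = K * K ^ (p1 - 1) := by
    conv_lhs => rw [show p1 = (p1 - 1) + 1 by omega]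
    rw [pow_succ]; ring
  have hp2 : 0 < K ^ p2 := Nat.pow_pos (by omega)
  set Q := K ^ (p1 - 1)
  nlinarith [hp2]

lemma geom_sum_aux {K : ℕ} (hK : 1 ≤ K) : ∀ D : ℕ,
    ∑ m ∈ Finset.Icc 1 D, (K - 1) * K ^ m = K ^ (D + 1) - K := by
  intro D
  induction D with
  | zero => simp
  | succ D ih =>
      rw [Finset.sum_Icc_succ_top (by omega), ih]
      have h1 : K ≤ K ^ (D + 1) := by
        calc K = K ^ 1 := (pow_one K).symm
        _ ≤ K ^ (D + 1) := Nat.pow_le_pow_right (by omega) (by omega)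
      have h2 : K ^ (D + 1 + 1) = K * K ^ (D + 1) := by rw [pow_succ]; ring
      have h3 : (K - 1) * K ^ (D + 1) = K * K ^ (D + 1) - K ^ (D + 1) := by
        rw [Nat.sub_mul, one_mul]
      have h4 : K ^ (D + 1) ≤ K * K ^ (D + 1) := Nat.le_mul_of_pos_left _ (by omega)
      omega

lemma lex_of_lt {K : ℕ} (f g : ℕ → ℕ) (hf : ∀ m, f m < K) (hg : ∀ m, g m < K) :
    ∀ D : ℕ, (∑ m ∈ Finset.Icc 1 D, f m * K ^ m < ∑ m ∈ Finset.Icc 1 D, g m * K ^ m) →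
    ∃ ℓ, 1 ≤ ℓ ∧ ℓ ≤ D ∧ (∀ m, ℓ < m → m ≤ D → f m = g m) ∧ f ℓ < g ℓ := by
  have hK : 1 ≤ K := by have := hf 0; omega
  intro D
  induction D with
  | zero => intro h; simp at h
  | succ D ih =>
      intro h
      rw [Finset.sum_Icc_succ_top (by omega : 1 ≤ D + 1),
        Finset.sum_Icc_succ_top (by omega : 1 ≤ D + 1)] at h
      rcases lt_trichotomy (f (D + 1)) (g (D + 1)) with hlt | heq | hgt
      · exact ⟨D + 1, by omega, le_refl _, fun m h1 h2 => by omega, hlt⟩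
      · rw [heq] at h
        obtain ⟨ℓ, h1, h2, h3, h4⟩ := ih (by omega)
        exact ⟨ℓ, h1, by omega, fun m hm1 hm2 => by
          rcases Nat.lt_or_ge m (D + 1) with hm | hm
          · exact h3 m hm1 (by omega)
          · have : m = D + 1 := by omega
            rw [this]; exact heq, h4⟩
      · exfalso
        have hb : ∑ m ∈ Finset.Icc 1 D, g m * K ^ m ≤ K ^ (D + 1) - K := by
          rw [← geom_sum_aux hK D]
          apply Finset.sum_le_sum
          intro m _
          have := hg m
          exact Nat.mul_le_mul_right _ (by omega)
        have hfb : (g (D + 1) + 1) * K ^ (D + 1) ≤ f (D + 1) * K ^ (D + 1) :=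
          Nat.mul_le_mul_right _ (by omega)
        have hKp : K ≤ K ^ (D + 1) := by
          calc K = K ^ 1 := (pow_one K).symm
          _ ≤ K ^ (D + 1) := Nat.pow_le_pow_right (by omega) (by omega)
        set Q := K ^ (D + 1)
        have h5 : (g (D+1) + 1) * Q = g (D+1) * Q + Q := by ring
        omega

lemma exists_feas (d : ℤ) (a : ℤ × ℤ → ℤ) :
    ∀ (n : ℕ) (A : Finset (ℤ × ℤ)) (C : Finset ℤ), A.card = n → C.card = n →
    (∀ s : ℤ, (A.filter fun x => s ≤ a x).card ≤ (C.filter fun c => s - d ≤ c).card) →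
    ∃ g : ℤ × ℤ → ℤ, Set.BijOn g ↑A ↑C ∧ ∀ x ∈ A, a x - g x ≤ d := by
  intro n
  induction n with
  | zero =>
      intro A C hA hC _
      rw [Finset.card_eq_zero] at hA hC
      subst hA; subst hC
      exact ⟨fun _ => 0, by simp [Set.bijOn_empty], by simp⟩
  | succ n ih =>
      intro A C hA hC hH
      have hAne : A.Nonempty := Finset.card_pos.mp (by omega)
      have hCne : C.Nonempty := Finset.card_pos.mp (by omega)
      obtain ⟨x0, hx0A, hx0max⟩ := Finset.exists_max_image A a hAne
      set c0 := C.max' hCne with hc0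
      have hc0C : c0 ∈ C := C.max'_mem hCne
      -- feasibility of the top pair
      have hfeas : a x0 - c0 ≤ d := by
        have h1 : 0 < (A.filter fun x => a x0 ≤ a x).card := by
          apply Finset.card_pos.mpr
          exact ⟨x0, Finset.mem_filter.mpr ⟨hx0A, le_refl _⟩⟩
        have h2 := hH (a x0)
        have h3 : 0 < (C.filter fun c => a x0 - d ≤ c).card := lt_of_lt_of_le h1 h2
        obtain ⟨c, hc⟩ := Finset.card_pos.mp h3
        rw [Finset.mem_filter] at hc
        have := C.le_max' c hc.1
        omega
      -- the reduced sets
      set A' := A.erase x0 with hA'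
      set C' := C.erase c0 with hC'
      have hA'card : A'.card = n := by
        rw [hA', Finset.card_erase_of_mem hx0A]; omega
      have hC'card : C'.card = n := by
        rw [hC', Finset.card_erase_of_mem hc0C]; omega
      have hH' : ∀ s : ℤ, (A'.filter fun x => s ≤ a x).card ≤ (C'.filter fun c => s - d ≤ c).card := by
        intro s
        rw [hA', hC', Finset.filter_erase, Finset.filter_erase]
        by_cases hsd : s - d ≤ c0
        · have hc0f : c0 ∈ C.filter fun c => s - d ≤ c := Finset.mem_filter.mpr ⟨hc0C, hsd⟩
          rw [Finset.card_erase_of_mem hc0f]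
          by_cases hsx : s ≤ a x0
          · have hx0f : x0 ∈ A.filter fun x => s ≤ a x := Finset.mem_filter.mpr ⟨hx0A, hsx⟩
            rw [Finset.card_erase_of_mem hx0f]
            have := hH s
            omega
          · have : (A.filter fun x => s ≤ a x) = ∅ := by
              apply Finset.filter_eq_empty_iff.mpr
              intro y hy
              have := hx0max y hy
              omega
            rw [this]
            simp
        · have hCe : (C.filter fun c => s - d ≤ c) = ∅ := by
            apply Finset.filter_eq_empty_iff.mpr
            intro c hc
            have := C.le_max' c hc
            omega
          have hAe : (A.filter fun x => s ≤ a x) = ∅ := by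
            have h7 := hH s
            rw [hCe] at h7
            simp only [Finset.card_empty, Nat.le_zero] at h7
            exact Finset.card_eq_zero.mp h7
          rw [hAe, hCe]
          simp
      obtain ⟨g', hg'bij, hg'feas⟩ := ih A' C' hA'card hC'card hH'
      refine ⟨Function.update g' x0 c0, ?_, ?_⟩
      · constructor
        · -- MapsTo
          intro z hz
          by_cases hzx : z = x0
          · subst hzx
            rw [Function.update_self]
            exact Finset.mem_coe.mpr hc0C
          · rw [Function.update_of_ne hzx]
            have hzA' : z ∈ (A' : Set (ℤ × ℤ)) :=
              Finset.mem_coe.mpr (Finset.mem_erase.mpr ⟨hzx, Finset.mem_coe.mp hz⟩)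
            have h8 := hg'bij.mapsTo hzA'
            rw [hC'] at h8
            exact Finset.mem_coe.mpr (Finset.mem_of_mem_erase (Finset.mem_coe.mp h8))
        constructor
        · -- InjOn
          intro z hz w hw hzw
          by_cases hzx : z = x0 <;> by_cases hwx : w = x0
          · rw [hzx, hwx]
          · exfalso
            subst hzx
            rw [Function.update_self, Function.update_of_ne hwx] at hzw
            have hwA' : w ∈ (A' : Set (ℤ × ℤ)) :=
              Finset.mem_coe.mpr (Finset.mem_erase.mpr ⟨hwx, Finset.mem_coe.mp hw⟩)
            have := hg'bij.mapsTo hwA'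
            rw [← hzw] at this
            simp [hC', Finset.mem_coe, Finset.mem_erase] at this
          · exfalso
            subst hwx
            rw [Function.update_self, Function.update_of_ne hzx] at hzw
            have hzA' : z ∈ (A' : Set (ℤ × ℤ)) :=
              Finset.mem_coe.mpr (Finset.mem_erase.mpr ⟨hzx, Finset.mem_coe.mp hz⟩)
            have := hg'bij.mapsTo hzA'
            rw [hzw] at this
            simp [hC', Finset.mem_coe, Finset.mem_erase] at this
          · rw [Function.update_of_ne hzx, Function.update_of_ne hwx] at hzw
            exact hg'bij.injOn
              (Finset.mem_coe.mpr (Finset.mem_erase.mpr ⟨hzx, Finset.mem_coe.mp hz⟩))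
              (Finset.mem_coe.mpr (Finset.mem_erase.mpr ⟨hwx, Finset.mem_coe.mp hw⟩)) hzw
        · -- SurjOn
          intro c hc
          by_cases hcc : c = c0
          · subst hcc
            exact ⟨x0, Finset.mem_coe.mpr hx0A, Function.update_self _ _ _⟩
          · have hcC' : c ∈ (C' : Set ℤ) :=
              Finset.mem_coe.mpr (Finset.mem_erase.mpr ⟨hcc, Finset.mem_coe.mp hc⟩)
            obtain ⟨z, hzA', hzc⟩ := hg'bij.surjOn hcC'
            have hzA'' : z ∈ A' := Finset.mem_coe.mp hzA'
            have hzx : z ≠ x0 := (Finset.mem_erase.mp hzA'').1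
            refine ⟨z, ?_, ?_⟩
            · exact Finset.mem_coe.mpr (Finset.mem_of_mem_erase hzA'')
            · rw [Function.update_of_ne hzx]; exact hzc
      · intro x hx
        by_cases hxx : x = x0
        · subst hxx; rw [Function.update_self]; exact hfeas
        · rw [Function.update_of_ne hxx]
          exact hg'feas x (Finset.mem_erase.mpr ⟨hxx, hx⟩)

variable {d : ℤ} {a : ℤ × ℤ → ℤ} {A : Finset (ℤ × ℤ)} {C : Finset ℤ}

/-- weight of a matching -/
def Wt (a : ℤ × ℤ → ℤ) (A : Finset (ℤ × ℤ)) (K : ℕ) (g : ℤ × ℤ → ℤ) : ℕ :=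
  ∑ x ∈ A, K ^ (a x - g x).toNat

lemma pow_swap_lt' {K q1 q2 p1 p2 : ℕ} (hK : 2 ≤ K) (h1 : q1 < p1) (h2 : q2 < p1) :
    K ^ q1 + K ^ q2 < K ^ p1 + K ^ p2 := by
  have hq1 : K ^ q1 ≤ K ^ (p1 - 1) := Nat.pow_le_pow_right (by omega) (by omega)
  have hq2 : K ^ q2 ≤ K ^ (p1 - 1) := Nat.pow_le_pow_right (by omega) (by omega)
  have h3 : K ^ p1 = K * K ^ (p1 - 1) := by
    conv_lhs => rw [show p1 = (p1 - 1) + 1 by omega]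
    rw [pow_succ]; ring
  have hp2 : 0 < K ^ p2 := Nat.pow_pos (by omega)
  set Q := K ^ (p1 - 1)
  nlinarith

lemma swap_bijOn {x0 b : ℤ × ℤ} (hx0 : x0 ∈ A) (hb : b ∈ A) :
    Set.BijOn (Equiv.swap x0 b) ↑A ↑A := by
  have hmap : Set.MapsTo (Equiv.swap x0 b) ↑A ↑A := by
    intro z hz
    rcases eq_or_ne z x0 with h | h
    · subst h; rw [Equiv.swap_apply_left]; exact Finset.mem_coe.mpr hb
    rcases eq_or_ne z b with h' | h'
    · subst h'; rw [Equiv.swap_apply_right]; exact Finset.mem_coe.mpr hx0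
    · rw [Equiv.swap_apply_of_ne_of_ne h h']; exact hz
  refine ⟨hmap, (Equiv.injective _).injOn, ?_⟩
  intro z hz
  refine ⟨Equiv.swap x0 b z, hmap hz, ?_⟩
  simp

lemma improve (hd : 0 < d)
    (hinj : ∀ x ∈ A, ∀ y ∈ A, a x = a y → x = y)
    (hlt : ∀ x ∈ A, ∀ c ∈ C, c < a x)
    {K : ℕ} (hK : 2 ≤ K)
    (f h : ℤ × ℤ → ℤ)
    (hfb : Set.BijOn f ↑A ↑C) (hff : ∀ x ∈ A, a x - f x ≤ d)
    (hhb : Set.BijOn h ↑A ↑C)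
    {x0 : ℤ × ℤ} (hx0A : x0 ∈ A)
    (hx0feas : a x0 - h x0 ≤ d)
    (hmax : ∀ y ∈ A, f y ≠ h y → a y ≤ a x0)
    (hord : h x0 < f x0) :
    ∃ f', (Set.BijOn f' ↑A ↑C ∧ ∀ x ∈ A, a x - f' x ≤ d) ∧ Wt a A K f < Wt a A K f' := by
  -- find b with f b = h x0
  have hhx0C : h x0 ∈ C := Finset.mem_coe.mp (hhb.mapsTo (Finset.mem_coe.mpr hx0A))
  obtain ⟨b, hbA, hfb0⟩ := hfb.surjOn (Finset.mem_coe.mpr hhx0C)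
  have hbA' : b ∈ A := Finset.mem_coe.mp hbA
  have hbne : b ≠ x0 := by
    intro hcontra; subst hcontra
    exact absurd hfb0 (by omega)
  have hbD : f b ≠ h b := by
    intro hcontra
    have : h b = h x0 := by rw [← hcontra, hfb0]
    exact hbne (hhb.injOn (Finset.mem_coe.mpr hbA') (Finset.mem_coe.mpr hx0A) this)
  have hab : a b < a x0 := by
    have h1 := hmax b hbA' hbD
    rcases lt_or_eq_of_le h1 with h2 | h2
    · exact h2
    · exact absurd (hinj b hbA' x0 hx0A h2) hbne
  -- the swapped matching
  set f' := fun z => f (Equiv.swap x0 b z) with hf'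
  have hf'x0 : f' x0 = h x0 := by rw [hf']; simp [Equiv.swap_apply_left]; exact hfb0
  have hf'b : f' b = f x0 := by rw [hf']; simp [Equiv.swap_apply_right]
  have hf'other : ∀ z, z ≠ x0 → z ≠ b → f' z = f z := by
    intro z h1 h2; rw [hf']; simp [Equiv.swap_apply_of_ne_of_ne h1 h2]
  have hbij' : Set.BijOn f' ↑A ↑C := hfb.comp (swap_bijOn hx0A hbA')
  -- column values
  have hfx0C : f x0 ∈ C := Finset.mem_coe.mp (hfb.mapsTo (Finset.mem_coe.mpr hx0A))
  have h1 := hlt x0 hx0A (h x0) hhx0C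
  have h2 := hlt x0 hx0A (f x0) hfx0C
  have h3 := hlt b hbA' (h x0) hhx0C
  have h4 := hlt b hbA' (f x0) hfx0C
  have hfeas' : ∀ x ∈ A, a x - f' x ≤ d := by
    intro x hx
    rcases eq_or_ne x x0 with h | h
    · subst h; rw [hf'x0]; exact hx0feas
    rcases eq_or_ne x b with h' | h'
    · subst h'; rw [hf'b]
      have := hff x0 hx0A
      omega
    · rw [hf'other x h h']; exact hff x hx
  refine ⟨f', ⟨hbij', hfeas'⟩, ?_⟩
  -- sum comparison
  have hbe : b ∈ A.erase x0 := Finset.mem_erase.mpr ⟨hbne, hbA'⟩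
  have hsplit : ∀ g : ℤ × ℤ → ℤ, Wt a A K g =
      K ^ (a x0 - g x0).toNat + (K ^ (a b - g b).toNat +
        ∑ x ∈ (A.erase x0).erase b, K ^ (a x - g x).toNat) := by
    intro g
    rw [Wt, ← Finset.add_sum_erase _ _ hx0A, ← Finset.add_sum_erase _ _ hbe]
  rw [hsplit f, hsplit f']
  have hrest : ∑ x ∈ (A.erase x0).erase b, K ^ (a x - f' x).toNat
      = ∑ x ∈ (A.erase x0).erase b, K ^ (a x - f x).toNat := by
    apply Finset.sum_congr rfl
    intro x hx
    have hx1 : x ≠ b := (Finset.mem_erase.mp hx).1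
    have hx2 : x ≠ x0 := (Finset.mem_erase.mp (Finset.mem_erase.mp hx).2).1
    rw [hf'other x hx2 hx1]
  rw [hrest, hf'x0, hf'b]
  have hkey : K ^ (a x0 - f x0).toNat + K ^ (a b - f b).toNat
      < K ^ (a x0 - h x0).toNat + K ^ (a b - f x0).toNat := by
    apply pow_swap_lt' hK
    · omega
    · rw [hfb0]; omega
  omega


lemma W_eq_digits {d : ℤ} (hd : 0 < d) (a : ℤ × ℤ → ℤ) (A : Finset (ℤ × ℤ)) (C : Finset ℤ)
    (hlt : ∀ x ∈ A, ∀ c ∈ C, c < a x) (K : ℕ)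
    (g : ℤ × ℤ → ℤ) (hgb : Set.BijOn g ↑A ↑C) (hgf : ∀ x ∈ A, a x - g x ≤ d) :
    Wt a A K g = ∑ m ∈ Finset.Icc 1 d.toNat,
      (A.filter fun x => a x - g x = (m : ℤ)).card * K ^ m := by
  have hmem : ∀ x ∈ A, (a x - g x).toNat ∈ Finset.Icc 1 d.toNat := by
    intro x hx
    have h1 : g x ∈ C := Finset.mem_coe.mp (hgb.mapsTo (Finset.mem_coe.mpr hx))
    have h2 := hlt x hx (g x) h1
    have h3 := hgf x hx
    simp only [Finset.mem_Icc]
    omega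
  rw [Wt, ← Finset.sum_fiberwise_of_maps_to hmem]
  apply Finset.sum_congr rfl
  intro m hm
  have hm1 : 1 ≤ m := (Finset.mem_Icc.mp hm).1
  have hfe : (A.filter fun x => (a x - g x).toNat = m)
      = (A.filter fun x => a x - g x = (m : ℤ)) := by
    apply Finset.filter_congr
    intro x hx
    have h1 : g x ∈ C := Finset.mem_coe.mp (hgb.mapsTo (Finset.mem_coe.mpr hx))
    have h2 := hlt x hx (g x) h1
    constructor
    · intro h; omega
    · intro h; omega
  rw [← hfe]
  rw [Finset.sum_congr rfl (fun x hx => by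
    rw [(Finset.mem_filter.mp hx).2])]
  rw [Finset.sum_const, smul_eq_mul]

lemma abstract_main (d : ℤ) (hd : 0 < d) (a : ℤ × ℤ → ℤ) (A : Finset (ℤ × ℤ)) (C : Finset ℤ)
    (hinj : ∀ x ∈ A, ∀ y ∈ A, a x = a y → x = y)
    (hlt : ∀ x ∈ A, ∀ c ∈ C, c < a x)
    (hcard : A.card = C.card)
    (hH : ∀ s : ℤ, (A.filter fun x => s ≤ a x).card ≤ (C.filter fun c => s - d ≤ c).card) :
    ∃ σ₀ : ℤ × ℤ → ℤ, Set.BijOn σ₀ ↑A ↑C ∧ (∀ x ∈ A, a x - σ₀ x ≤ d) ∧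
      ∀ σ : ℤ × ℤ → ℤ, Set.BijOn σ ↑A ↑C → (∀ x ∈ A, a x - σ x ≤ d) →
        ¬ Set.EqOn σ σ₀ ↑A →
        ∃ ℓ : ℤ, 1 ≤ ℓ ∧ ℓ ≤ d ∧
          (∀ m : ℤ, ℓ < m → m ≤ d →
            (A.filter fun x => a x - σ x = m).card = (A.filter fun x => a x - σ₀ x = m).card) ∧
          (A.filter fun x => a x - σ x = ℓ).card < (A.filter fun x => a x - σ₀ x = ℓ).card := by
  classical
  set K := A.card + 2 with hKdef
  have hK : 2 ≤ K := by omega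
  -- the set of weights of feasible matchings
  set V : Set ℕ := {w | ∃ g : ℤ × ℤ → ℤ, (Set.BijOn g ↑A ↑C ∧ ∀ x ∈ A, a x - g x ≤ d) ∧ Wt a A K g = w}
    with hV
  have hVne : V.Nonempty := by
    obtain ⟨g, hg1, hg2⟩ := exists_feas d a A.card A C rfl hcard.symm hH
    exact ⟨Wt a A K g, g, ⟨hg1, hg2⟩, rfl⟩
  have hVbdd : BddAbove V := by
    refine ⟨A.card * K ^ d.toNat, ?_⟩
    rintro w ⟨g, ⟨hg1, hg2⟩, rfl⟩
    rw [Wt]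
    calc ∑ x ∈ A, K ^ (a x - g x).toNat ≤ ∑ _x ∈ A, K ^ d.toNat := by
          apply Finset.sum_le_sum
          intro x hx
          exact Nat.pow_le_pow_right (by omega) (by have := hg2 x hx; omega)
    _ = A.card * K ^ d.toNat := by rw [Finset.sum_const, smul_eq_mul]
  obtain ⟨σ₀, hσ₀, hW0⟩ := Nat.sSup_mem hVne hVbdd
  have hmax : ∀ g : ℤ × ℤ → ℤ, (Set.BijOn g ↑A ↑C ∧ ∀ x ∈ A, a x - g x ≤ d) →
      Wt a A K g ≤ Wt a A K σ₀ := by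
    intro g hg
    rw [hW0]
    exact le_csSup hVbdd ⟨g, hg, rfl⟩
  refine ⟨σ₀, hσ₀.1, hσ₀.2, ?_⟩
  intro σ hσb hσf hne
  -- strict W inequality
  have hWlt : Wt a A K σ < Wt a A K σ₀ := by
    have hDne : ∃ x ∈ A, σ x ≠ σ₀ x := by
      by_contra hcon
      push_neg at hcon
      exact hne (fun x hx => hcon x (Finset.mem_coe.mp hx))
    set D := A.filter (fun x => σ x ≠ σ₀ x) with hD
    have hDne' : D.Nonempty := by
      obtain ⟨x, hx1, hx2⟩ := hDne
      exact ⟨x, Finset.mem_filter.mpr ⟨hx1, hx2⟩⟩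
    obtain ⟨x0, hx0D, hx0max⟩ := Finset.exists_max_image D a hDne'
    have hx0A : x0 ∈ A := (Finset.mem_filter.mp hx0D).1
    have hx0ne : σ x0 ≠ σ₀ x0 := (Finset.mem_filter.mp hx0D).2
    have hmaxD : ∀ y ∈ A, σ y ≠ σ₀ y → a y ≤ a x0 := by
      intro y hy hyne
      exact hx0max y (Finset.mem_filter.mpr ⟨hy, hyne⟩)
    rcases lt_or_gt_of_ne hx0ne with hcase | hcase
    · -- σ x0 < σ₀ x0 : improve σ₀, contradiction with maximality
      exfalso
      obtain ⟨f', hf', hWf'⟩ := improve hd hinj hlt hK σ₀ σ hσ₀.1 hσ₀.2 hσb hx0A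
        (hσf x0 hx0A) (fun y hy hyne => hmaxD y hy (Ne.symm hyne)) hcase
      exact absurd (hmax f' hf') (by omega)
    · -- σ₀ x0 < σ x0 : improve σ
      obtain ⟨f', hf', hWf'⟩ := improve hd hinj hlt hK σ σ₀ hσb hσf hσ₀.1 hx0A
        (hσ₀.2 x0 hx0A) hmaxD hcase
      exact lt_of_lt_of_le hWf' (hmax f' hf')
  -- convert to digits
  rw [W_eq_digits hd a A C hlt K σ hσb hσf,
      W_eq_digits hd a A C hlt K σ₀ hσ₀.1 hσ₀.2] at hWlt
  have hflt : ∀ m : ℕ, (A.filter fun x => a x - σ x = (m:ℤ)).card < K := by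
    intro m
    have := Finset.card_filter_le A (fun x => a x - σ x = (m:ℤ))
    omega
  have hglt : ∀ m : ℕ, (A.filter fun x => a x - σ₀ x = (m:ℤ)).card < K := by
    intro m
    have := Finset.card_filter_le A (fun x => a x - σ₀ x = (m:ℤ))
    omega
  obtain ⟨ℓ, hℓ1, hℓ2, hℓ3, hℓ4⟩ := lex_of_lt _ _ hflt hglt d.toNat hWlt
  refine ⟨(ℓ : ℤ), by exact_mod_cast hℓ1, by omega, ?_, ?_⟩
  · intro m hm1 hm2
    have hm0 : 1 ≤ m := by omega
    have := hℓ3 m.toNat (by omega) (by omega)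
    have hcast : ((m.toNat : ℤ)) = m := by omega
    rw [hcast] at this
    exact this
  · have hcast : (((ℓ : ℤ)) : ℤ) = (ℓ : ℤ) := rfl
    exact hℓ4


/-- `e_m(τ)`: the number of rows `(i,λ) ∈ R_N` with `φ((i,λ), τ(i,λ)) = m`,
where `φ((i,λ),i') = p·i − i' − (λ−1)·d`. -/
noncomputable def eCount (p d : ℤ) (RN : Set (ℤ × ℤ)) (τ : ℤ × ℤ → ℤ) (m : ℤ) : ℕ :=
  {x ∈ RN | p * x.1 - τ x - (x.2 - 1) * d = m}.ncard

/-- There is a bijection `σ₀ : R_N → C_N` with graph contained in `T_N` which is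
the unique lexicographic maximizer: for any other such bijection `σ`, there is an
`ℓ ∈ {1,…,d}` with `e_m(σ) = e_m(σ₀)` for `ℓ < m ≤ d` and `e_ℓ(σ) < e_ℓ(σ₀)`.
Here, if `1 < J ≤ (p+1)/2` then `R_N = R_J` and `C_N` consists of the `|R_J|`
largest elements of `C_J`; if `(p+1)/2 ≤ J < p` then `C_N = C_J` and `R_N`
consists of the `|C_J|` elements of `R_J` with smallest first coordinate. -/
theorem stmt12 (p : ℕ) (hp : p.Prime) (hodd : Odd p) (d : ℤ) (hd : 0 < d)
    (hpd : ¬ (p : ℤ) ∣ d) (J : ℤ) (hJ1 : 1 < J) (hJ2 : J < (p : ℤ))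
    (RN : Set (ℤ × ℤ)) (CN : Set ℤ)
    (hcase :
      (2 * J ≤ (p : ℤ) + 1 ∧ RN = Rset p d J ∧ CN ⊆ Cset p d J ∧
        CN.ncard = (Rset p d J).ncard ∧
        ∀ x ∈ CN, ∀ y ∈ Cset p d J \ CN, y < x) ∨
      ((p : ℤ) + 1 ≤ 2 * J ∧ CN = Cset p d J ∧ RN ⊆ Rset p d J ∧
        RN.ncard = (Cset p d J).ncard ∧
        ∀ x ∈ RN, ∀ y ∈ Rset p d J \ RN, x.1 < y.1)) :
    ∃ σ₀ : ℤ × ℤ → ℤ, Set.BijOn σ₀ RN CN ∧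
      (∀ x ∈ RN, (p : ℤ) * x.1 - σ₀ x ≤ x.2 * d) ∧
      ∀ σ : ℤ × ℤ → ℤ, Set.BijOn σ RN CN →
        (∀ x ∈ RN, (p : ℤ) * x.1 - σ x ≤ x.2 * d) →
        ¬ Set.EqOn σ σ₀ RN →
        ∃ ℓ : ℤ, 1 ≤ ℓ ∧ ℓ ≤ d ∧
          (∀ m : ℤ, ℓ < m → m ≤ d →
            eCount p d RN σ m = eCount p d RN σ₀ m) ∧
          eCount p d RN σ ℓ < eCount p d RN σ₀ ℓ := by
  classical
  have hRsub : RN ⊆ Rset (p:ℤ) d J := by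
    rcases hcase with ⟨_, h, _, _, _⟩ | ⟨_, _, h, _, _⟩
    · rw [h]
    · exact h
  have hCsub : CN ⊆ Cset (p:ℤ) d J := by
    rcases hcase with ⟨_, _, h, _, _⟩ | ⟨_, h, _, _, _⟩
    · exact h
    · rw [h]
  have hRfin : RN.Finite := (Rset_finite hp hd hJ1 hJ2).subset hRsub
  have hCfin : CN.Finite := (Cset_finite hp hd hJ1).subset hCsub
  set A : Finset (ℤ × ℤ) := hRfin.toFinset with hAdef
  set C : Finset ℤ := hCfin.toFinset with hCdef
  have hAco : (A : Set (ℤ × ℤ)) = RN := hRfin.coe_toFinset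
  have hCco : (C : Set ℤ) = CN := hCfin.coe_toFinset
  have hAmem : ∀ x, x ∈ A ↔ x ∈ RN := fun x => hRfin.mem_toFinset
  have hCmem : ∀ c, c ∈ C ↔ c ∈ CN := fun c => hCfin.mem_toFinset
  have hRNcard : RN.ncard = A.card := by rw [← hAco, Set.ncard_coe_finset]
  have hCNcard : CN.ncard = C.card := by rw [← hCco, Set.ncard_coe_finset]
  have hRsetfin := Rset_finite hp hd hJ1 hJ2 (p := p) (d := d) (J := J)
  have hcard : A.card = C.card := by
    rcases hcase with ⟨_, hR, _, hn, _⟩ | ⟨_, hC, _, hn, _⟩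
    · rw [← hRNcard, ← hCNcard, hn, hR]
    · rw [← hRNcard, ← hCNcard, hn, hC]
  have hinj : ∀ x ∈ A, ∀ y ∈ A, aval p d x = aval p d y → x = y := by
    intro x hx y hy hxy
    exact aval_inj hp hpd hJ2 (hRsub ((hAmem x).mp hx)) (hRsub ((hAmem y).mp hy)) hxy
  have hlt : ∀ x ∈ A, ∀ c ∈ C, c < aval p d x := by
    intro x hx c hc
    exact c_lt_aval hp hd hJ2 (hCsub ((hCmem c).mp hc)) (hRsub ((hAmem x).mp hx))
  -- the Hall condition
  have hH : ∀ s : ℤ, (A.filter fun x => s ≤ aval p d x).card ≤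
      (C.filter fun c => s - d ≤ c).card := by
    intro s
    by_cases hs : s ≤ d
    · have hCfull : C.filter (fun c => s - d ≤ c) = C := by
        apply Finset.filter_true_of_mem
        intro c hc
        have := (hCsub ((hCmem c).mp hc)).1
        omega
      rw [hCfull, ← hcard]
      exact Finset.card_filter_le _ _
    · push_neg at hs
      have hmapgen : ∀ x ∈ A.filter (fun x => s ≤ aval p d x),
          aval p d x - d ∈ Cset (p:ℤ) d J ∧ s - d ≤ aval p d x - d := by
        intro x hx
        obtain ⟨hxA, hxs⟩ := Finset.mem_filter.mp hx
        refine ⟨aval_sub_mem hp hd hpd hJ1 hJ2 (hRsub ((hAmem x).mp hxA)) (by omega), by omega⟩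
      have hinjon : Set.InjOn (fun x => aval p d x - d)
          ↑(A.filter fun x => s ≤ aval p d x) := by
        intro x hx y hy hxy
        simp only [Finset.coe_filter, Set.mem_setOf_eq] at hx hy
        have hxy' : aval p d x - d = aval p d y - d := hxy
        exact hinj x hx.1 y hy.1 (by omega)
      rcases hcase with ⟨_, hR, hCs, hn, htop⟩ | ⟨_, hC, hRs, hn, _⟩
      · -- case 1 : CN is the top part of Cset
        by_cases hall : ∀ c ∈ C, s - d ≤ c
        · have hCfull : C.filter (fun c => s - d ≤ c) = C := Finset.filter_true_of_mem hall
          rw [hCfull, ← hcard]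
          exact Finset.card_filter_le _ _
        · push_neg at hall
          obtain ⟨c₀, hc₀C, hc₀⟩ := hall
          apply Finset.card_le_card_of_injOn (fun x => aval p d x - d) _ hinjon
          intro x hx
          obtain ⟨hmem1, hmem2⟩ := hmapgen x hx
          apply Finset.mem_filter.mpr
          refine ⟨(hCmem _).mpr ?_, hmem2⟩
          by_contra hnot
          have := htop c₀ ((hCmem c₀).mp hc₀C) (aval p d x - d) ⟨hmem1, hnot⟩
          omega
      · -- case 2 : CN = Cset
        apply Finset.card_le_card_of_injOn (fun x => aval p d x - d) _ hinjon
        intro x hx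
        obtain ⟨hmem1, hmem2⟩ := hmapgen x hx
        apply Finset.mem_filter.mpr
        exact ⟨(hCmem _).mpr (by rw [hC]; exact hmem1), hmem2⟩
  obtain ⟨σ₀, hbij, hfeas, hlex⟩ := abstract_main d hd (aval p d) A C hinj hlt hcard hH
  have hfeq : ∀ (τ : ℤ × ℤ → ℤ) (x : ℤ × ℤ),
      (aval p d x - τ x ≤ d ↔ (p:ℤ) * x.1 - τ x ≤ x.2 * d) := by
    intro τ x
    rw [aval]
    constructor <;> intro h <;> nlinarith
  have hecount : ∀ (τ : ℤ × ℤ → ℤ) (m : ℤ),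
      eCount p d (↑A) τ m = (A.filter fun x => aval p d x - τ x = m).card := by
    intro τ m
    rw [eCount, ← Set.ncard_coe_finset]
    congr 1
    rw [Finset.coe_filter]
    ext x
    simp only [Set.mem_setOf_eq, Finset.mem_coe, aval]
    constructor
    · rintro ⟨h1, h2⟩; exact ⟨h1, by linarith⟩
    · rintro ⟨h1, h2⟩; exact ⟨h1, by linarith⟩
  rw [← hAco, ← hCco]
  refine ⟨σ₀, hbij, ?_, ?_⟩
  · intro x hx
    exact (hfeq σ₀ x).mp (hfeas x (Finset.mem_coe.mp hx))
  · intro σ hσb hσf hσne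
    obtain ⟨ℓ, h1, h2, h3, h4⟩ := hlex σ hσb
      (fun x hx => (hfeq σ x).mpr (hσf x (Finset.mem_coe.mpr hx))) hσne
    refine ⟨ℓ, h1, h2, ?_, ?_⟩
    · intro m hm1 hm2
      rw [hecount σ m, hecount σ₀ m]
      exact h3 m hm1 hm2
    · rw [hecount σ ℓ, hecount σ₀ ℓ]
      exact h4
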